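/- If there exists an m×n matrix M' over Σ that is fair w.r.t. γ with d(M,M') ≤ k, then the number of M-unfair types (types of M whose cluster in M is not a fair set) is at most 2k. -/

import Mathlib

variable {m n c : ℕ} {A : Type*} [Fintype A] [DecidableEq A]

/-- The set of distinct row types of a matrix. -/
def types (M : Fin m → Fin n → A) : Finset (Fin n → A) :=
  Finset.univ.image (fun i => M i)

/-- The number of distinct rows of a matrix. -/
def dr (M : Fin m → Fin n → A) : ℕ := (types M).card

/-- The cluster of a type `τ` in `M`: the set of rows whose type is `τ`. -/
def cluster (M : Fin m → Fin n → A) (τ : Fin n → A) : Finset (Fin m) :=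
  Finset.univ.filter (fun i => M i = τ)

/-- The edit cost between two matrices: the number of positions where they differ. -/
def editCost (M M' : Fin m → Fin n → A) : ℕ :=
  ((Finset.univ : Finset (Fin m × Fin n)).filter (fun p => M p.1 p.2 ≠ M' p.1 p.2)).card

/-- The number of occurrences of color `z` in the coloring `γ`. -/
def colorCount (γ : Fin m → Fin c) (z : Fin c) : ℕ :=
  (Finset.univ.filter (fun i => γ i = z)).card

/-- A set of rows is fair w.r.t. `γ` if it witnesses the same color distribution as `γ`. -/
def fairSet (γ : Fin m → Fin c) (S : Finset (Fin m)) : Prop :=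
  ∀ z : Fin c, m * (S.filter (fun i => γ i = z)).card = colorCount γ z * S.card

/-- A matrix is fair if the cluster of each of its types is fair. -/
def fairMatrix (γ : Fin m → Fin c) (M' : Fin m → Fin n → A) : Prop :=
  ∀ τ ∈ types M', fairSet γ (cluster M' τ)

/-- The fairlet size `c̃ = m / gcd(|γ|_1, …, |γ|_c)`. -/
def fairletSize (γ : Fin m → Fin c) : ℕ :=
  m / Finset.univ.gcd (colorCount γ)

open Classical

/-- If `M` can be made fair with at most `k` edits, then `M` has
at most `2k` unfair types. -/
theorem card_unfair_types_le (hm : 0 < m) (hn : 0 < n)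
    (γ : Fin m → Fin c) (hγ : Function.Surjective γ)
    (M : Fin m → Fin n → A) (k : ℕ)
    (h : ∃ M' : Fin m → Fin n → A, fairMatrix γ M' ∧ editCost M M' ≤ k) :
    ((types M).filter (fun τ => ¬ fairSet γ (cluster M τ))).card ≤ 2 * k := by
  classical
  obtain ⟨M', hfair, hcost⟩ := h
  set D : Finset (Fin m) := Finset.univ.filter (fun i => M i ≠ M' i) with hD
  have hDcard : D.card ≤ editCost M M' := by
    have key : ∀ i : Fin m, M i ≠ M' i → ∃ j, M i j ≠ M' i j := by
      intro i hi
      by_contra hc; push_neg at hc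
      exact hi (funext hc)
    unfold editCost
    apply Finset.card_le_card_of_injOn
      (fun i => (i, if h : ∃ j, M i j ≠ M' i j then h.choose else ⟨0, hn⟩))
    · intro i hi
      simp only [hD, Finset.mem_coe, Finset.mem_filter, Finset.mem_univ, true_and] at hi ⊢
      have h := key i hi
      simpa [dif_pos h] using h.choose_spec
    · intro a _ b _ hab
      exact congrArg Prod.fst hab
  have hDsub : ((types M).filter (fun τ => ¬ fairSet γ (cluster M τ))) ⊆
      D.image (fun i => M i) ∪ D.image (fun i => M' i) := by
    intro τ hτ
    simp only [Finset.mem_filter] at hτ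
    obtain ⟨hτtypes, hτunfair⟩ := hτ
    by_cases hcl : cluster M τ = cluster M' τ
    · exfalso
      apply hτunfair
      rw [hcl]
      apply hfair
      obtain ⟨i, _, hi⟩ := Finset.mem_image.mp hτtypes
      have hmem : i ∈ cluster M' τ := by rw [← hcl]; simp [cluster, hi]
      simp only [cluster, Finset.mem_filter, Finset.mem_univ, true_and] at hmem
      exact Finset.mem_image.mpr ⟨i, Finset.mem_univ i, hmem⟩
    · have hex : ∃ i, ¬ ((M i = τ) ↔ (M' i = τ)) := by
        by_contra hc; push_neg at hc
        apply hcl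
        ext i
        simp only [cluster, Finset.mem_filter, Finset.mem_univ, true_and]
        exact hc i
      obtain ⟨i, hi⟩ := hex
      have hMM' : M i ≠ M' i := by
        intro he; rw [he] at hi; exact hi Iff.rfl
      have hiD : i ∈ D := by simp [hD, hMM']
      rcases eq_or_ne (M i) τ with h1 | h1
      · exact Finset.mem_union_left _ (Finset.mem_image.mpr ⟨i, hiD, h1⟩)
      · have h2 : M' i = τ := by
          by_contra h2
          exact hi (by simp [h1, h2])
        exact Finset.mem_union_right _ (Finset.mem_image.mpr ⟨i, hiD, h2⟩)
  calc ((types M).filter (fun τ => ¬ fairSet γ (cluster M τ))).card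
      ≤ (D.image (fun i => M i) ∪ D.image (fun i => M' i)).card :=
        Finset.card_le_card hDsub
    _ ≤ (D.image (fun i => M i)).card + (D.image (fun i => M' i)).card :=
        Finset.card_union_le _ _
    _ ≤ D.card + D.card := add_le_add Finset.card_image_le Finset.card_image_le
    _ ≤ 2 * k := by have := le_trans hDcard hcost; omega
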